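/- Let T be a Hom-finite Krull-Schmidt R-linear triangulated category, A → B → C → ΣA an Auslander-Reiten triangle in T, and U an indecomposable object. Writing [U,X] for the R-length of Hom(U,X), one has [U,A] − [U,B] + [U,C] ≠ 0 if and only if U ≅ C or U ≅ Σ⁻¹C. -/

import Mathlib

open CategoryTheory CategoryTheory.Limits CategoryTheory.Pretriangulated

universe v u

/-- The length of an `R`-module, defined as the Krull dimension of its submodule
lattice, truncated to a natural number (which recovers the usual length for
modules of finite length). -/
noncomputable def rlen (R : Type*) [Ring R] (M : Type*) [AddCommGroup M] [Module R M] : ℕ :=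
  ((Order.krullDim (Submodule R M)).unbotD 0).toNat

section Additive

variable (C : Type u) [Category.{v} C] [Preadditive C] [HasBinaryBiproducts C]

/-- Hom-finiteness over `R`: every Hom-module has finite length. -/
def HomFinite (R : Type*) [CommRing R] [CategoryTheory.Linear R C] : Prop :=
  ∀ X Y : C, IsFiniteLength R (X ⟶ Y)

/-- A Krull-Schmidt category: every object is a finite biproduct of objects with
local endomorphism rings. -/
def KrullSchmidt [HasFiniteBiproducts C] : Prop :=
  ∀ X : C, ∃ (n : ℕ) (f : Fin n → C),
    Nonempty (X ≅ ⨁ f) ∧ ∀ i, IsLocalRing (End (f i))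

/-- `X` is a direct summand of `U`. -/
def IsDirectSummand {C : Type u} [Category.{v} C] [Preadditive C] [HasBinaryBiproducts C]
    (X U : C) : Prop :=
  ∃ Z : C, Nonempty (U ≅ X ⊞ Z)

/-- The free abelian group on isomorphism classes of objects of `C`. -/
def FreeK0 : Type _ := FreeAbelianGroup (Quotient (isIsomorphicSetoid C))

noncomputable instance : AddCommGroup (FreeK0 C) :=
  inferInstanceAs (AddCommGroup (FreeAbelianGroup _))

/-- The subgroup of split relations `[A ⊞ B] - [A] - [B]`. -/
noncomputable def splitSubgroup : AddSubgroup (FreeK0 C) :=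
  AddSubgroup.closure {x | ∃ A B : C,
    x = FreeAbelianGroup.of (Quotient.mk (isIsomorphicSetoid C) (A ⊞ B))
      - FreeAbelianGroup.of (Quotient.mk (isIsomorphicSetoid C) A)
      - FreeAbelianGroup.of (Quotient.mk (isIsomorphicSetoid C) B)}

/-- The split Grothendieck group `K₀(C,0)`. -/
noncomputable def K0 : Type _ := FreeK0 C ⧸ splitSubgroup C

noncomputable instance : AddCommGroup (K0 C) :=
  inferInstanceAs (AddCommGroup (_ ⧸ splitSubgroup C))

/-- The class `[X]` of an object `X` in `K₀(C,0)`. -/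
noncomputable def cls (X : C) : K0 C :=
  QuotientAddGroup.mk (FreeAbelianGroup.of (Quotient.mk (isIsomorphicSetoid C) X))

end Additive

section Triangulated

variable (C : Type u) [Category.{v} C] [Preadditive C] [HasZeroObject C]
  [HasShift C ℤ] [∀ n : ℤ, (shiftFunctor C n).Additive] [Pretriangulated C]
  [HasBinaryBiproducts C]

/-- An Auslander-Reiten triangle. -/
def IsARTriangle (T : Triangle C) : Prop :=
  (T ∈ distTriang C) ∧ Indecomposable T.obj₁ ∧ Indecomposable T.obj₃ ∧ T.mor₃ ≠ 0 ∧
    ∀ ⦃W : C⦄ (t : W ⟶ T.obj₃), ¬ IsSplitEpi t → ∃ t' : W ⟶ T.obj₂, t' ≫ T.mor₂ = t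

/-- The subgroup `Ex(C)` of `K₀(C,0)` generated by distinguished triangles. -/
noncomputable def ExSubgroup : AddSubgroup (K0 C) :=
  AddSubgroup.closure {x | ∃ T, (T ∈ distTriang C) ∧
    x = cls C T.obj₁ - cls C T.obj₂ + cls C T.obj₃}

/-- The subgroup `AR(C)` of `K₀(C,0)` generated by Auslander-Reiten triangles. -/
noncomputable def ARSubgroup : AddSubgroup (K0 C) :=
  AddSubgroup.closure {x | ∃ T, IsARTriangle C T ∧
    x = cls C T.obj₁ - cls C T.obj₂ + cls C T.obj₃}

end Triangulated



set_option linter.unusedSectionVars false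


namespace ARAux
open Order

section OrderLemmas

variable {α β : Type*} [PartialOrder α] [PartialOrder β]

lemma length_le_height_prod (p : LTSeries (α × β)) :
    (p.length : ℕ∞) ≤ Order.height p.last.1 + Order.height p.last.2 := by
  suffices H : ∀ (n : ℕ) (p : LTSeries (α × β)), p.length = n →
      (p.length : ℕ∞) ≤ Order.height p.last.1 + Order.height p.last.2 from
    H p.length p rfl
  intro n
  induction n with
  | zero => intro p hn; rw [hn]; simp
  | succ n ih =>
    intro p hn
    rw [hn]
    have hlen : p.length ≠ 0 := by omega
    have hq : p.eraseLast.length = n := by simp [hn]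
    have IH := ih p.eraseLast hq
    rw [hq] at IH
    have hrel : p.eraseLast.last < p.last := p.eraseLast_last_rel_last hlen
    have h1 : p.eraseLast.last.1 ≤ p.last.1 := (le_of_lt hrel).1
    have h2 : p.eraseLast.last.2 ≤ p.last.2 := (le_of_lt hrel).2
    rcases Prod.lt_iff.mp hrel with ⟨hs, hle⟩ | ⟨hle, hs⟩
    · rcases eq_or_ne (Order.height p.last.1) ⊤ with htop | htop
      · rw [htop, top_add]; exact le_top
      · have hfin : Order.height p.eraseLast.last.1 < ⊤ :=
          lt_of_le_of_lt (Order.height_mono h1) (lt_top_iff_ne_top.mpr htop)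
        have hlt := Order.height_strictMono hs hfin
        calc ((n:ℕ∞) + 1)
            ≤ (Order.height p.eraseLast.last.1 + Order.height p.eraseLast.last.2) + 1 := by
              exact add_le_add IH le_rfl
          _ = (Order.height p.eraseLast.last.1 + 1) + Order.height p.eraseLast.last.2 := by
              ring
          _ ≤ Order.height p.last.1 + Order.height p.last.2 := by
              gcongr
              exact Order.add_one_le_of_lt hlt
    · rcases eq_or_ne (Order.height p.last.2) ⊤ with htop | htop
      · rw [htop, add_top]; exact le_top
      · have hfin : Order.height p.eraseLast.last.2 < ⊤ :=
          lt_of_le_of_lt (Order.height_mono h2) (lt_top_iff_ne_top.mpr htop)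
        have hlt := Order.height_strictMono hs hfin
        calc ((n:ℕ∞) + 1)
            ≤ (Order.height p.eraseLast.last.1 + Order.height p.eraseLast.last.2) + 1 := by
              exact add_le_add IH le_rfl
          _ = Order.height p.eraseLast.last.1 + (Order.height p.eraseLast.last.2 + 1) := by
              ring
          _ ≤ Order.height p.last.1 + Order.height p.last.2 := by
              gcongr
              exact Order.add_one_le_of_lt hlt

lemma krullDim_prod_le [Nonempty α] [Nonempty β] :
    krullDim (α × β) ≤ krullDim α + krullDim β := by
  apply iSup_le
  intro p
  have h := length_le_height_prod p
  calc (p.length : WithBot ℕ∞)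
      ≤ ((Order.height p.last.1 + Order.height p.last.2 : ℕ∞) : WithBot ℕ∞) := by
        exact_mod_cast h
    _ = (Order.height p.last.1 : WithBot ℕ∞) + (Order.height p.last.2 : WithBot ℕ∞) := by
        push_cast; rfl
    _ ≤ krullDim α + krullDim β :=
        add_le_add (height_le_krullDim _) (height_le_krullDim _)

lemma chains_le_krullDim (p q : LTSeries α) (h : p.last ≤ q.head) :
    ((p.length + q.length : ℕ) : WithBot ℕ∞) ≤ krullDim α := by
  rcases eq_or_lt_of_le h with he | hlt
  · have := LTSeries.length_le_krullDim (p.smash q he)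
    simpa using this
  · have := LTSeries.length_le_krullDim (p.append q hlt)
    rw [RelSeries.append_length] at this
    refine le_trans ?_ this
    have : p.length + q.length ≤ p.length + q.length + 1 := by omega
    exact_mod_cast this

end OrderLemmas

section Modules

variable {R : Type*} [Ring R] {M P : Type*} [AddCommGroup M] [Module R M]
  [AddCommGroup P] [Module R P]

lemma krullDim_submodule_le (N : Submodule R M) :
    krullDim (Submodule R M) ≤ krullDim (Submodule R N) + krullDim (Submodule R (M ⧸ N)) := by
  refine le_trans (krullDim_le_of_strictMono
    (fun X => ((Submodule.comap N.subtype X, Submodule.map N.mkQ X) :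
      Submodule R N × Submodule R (M ⧸ N))) ?_) krullDim_prod_le
  intro x y hxy
  rw [lt_iff_le_and_ne]
  constructor
  · exact ⟨Submodule.comap_mono hxy.le, Submodule.map_mono hxy.le⟩
  · intro heq
    have h1 : Submodule.comap N.subtype x = Submodule.comap N.subtype y :=
      congrArg Prod.fst heq
    have h2 : Submodule.map N.mkQ x = Submodule.map N.mkQ y := congrArg Prod.snd heq
    refine absurd (le_antisymm hxy.le ?_) hxy.ne
    intro m hm
    have : N.mkQ m ∈ Submodule.map N.mkQ x := h2 ▸ Submodule.mem_map_of_mem hm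
    obtain ⟨x', hx', heq'⟩ := this
    have hsub : m - x' ∈ N := by
      rw [← Submodule.ker_mkQ N, LinearMap.mem_ker, map_sub, heq', sub_self]
    have hy' : m - x' ∈ y := sub_mem hm (hxy.le hx')
    have : (⟨m - x', hsub⟩ : N) ∈ Submodule.comap N.subtype x := by
      rw [h1]; exact hy'
    have hx'' : m - x' ∈ x := this
    simpa using add_mem hx'' hx'

lemma add_chains_le_krullDim_submodule (N : Submodule R M)
    (p : LTSeries (Submodule R N)) (q : LTSeries (Submodule R (M ⧸ N))) :
    ((p.length + q.length : ℕ) : WithBot ℕ∞) ≤ krullDim (Submodule R M) := by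
  have hp : StrictMono (Submodule.map N.subtype) :=
    Submodule.map_strictMono_of_injective N.injective_subtype
  have hq : StrictMono (Submodule.comap N.mkQ) :=
    Submodule.comap_strictMono_of_surjective N.mkQ_surjective
  have := chains_le_krullDim (p.map _ hp) (q.map _ hq) ?_
  · simpa using this
  · rw [LTSeries.last_map, LTSeries.head_map]
    refine le_trans (Submodule.map_subtype_le N _) ?_
    intro m hm
    have h0 : N.mkQ m = 0 := (Submodule.Quotient.mk_eq_zero N).mpr hm
    simp [Submodule.mem_comap, h0]

lemma krullDim_simpleOrder_le {β : Type*} [PartialOrder β] [BoundedOrder β] [IsSimpleOrder β] :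
    krullDim β ≤ 1 := by
  apply iSup_le
  intro p
  suffices h : p.length ≤ 1 by exact_mod_cast Nat.cast_le.mpr h
  by_contra hc
  push_neg at hc
  have h01 : p ⟨0, by omega⟩ < p ⟨1, by omega⟩ := p.strictMono (Fin.mk_lt_mk.mpr (by omega))
  have h12 : p ⟨1, by omega⟩ < p ⟨2, by omega⟩ := p.strictMono (Fin.mk_lt_mk.mpr (by omega))
  rcases IsSimpleOrder.eq_bot_or_eq_top (p ⟨1, by omega⟩) with h | h
  · rw [h] at h01; exact not_lt_bot h01
  · rw [h] at h12; exact not_top_lt h12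

lemma krullDim_le_nat_of_isFiniteLength (h : IsFiniteLength R M) :
    ∃ n : ℕ, krullDim (Submodule R M) ≤ (n : WithBot ℕ∞) := by
  induction h with
  | @of_subsingleton M _ _ _ =>
    refine ⟨0, ?_⟩
    have : Subsingleton (Submodule R M) := by
      constructor; intro a b
      ext x
      simp [Subsingleton.elim x (0 : M)]
    simpa using krullDim_nonpos_of_subsingleton
  | @of_simple_quotient M _ _ N _ _ ih =>
    obtain ⟨n, hn⟩ := ih
    refine ⟨n + 1, le_trans (krullDim_submodule_le N) ?_⟩
    have h2 : krullDim (Submodule R (M ⧸ N)) ≤ 1 := krullDim_simpleOrder_le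
    calc krullDim (Submodule R N) + krullDim (Submodule R (M ⧸ N))
        ≤ (n : WithBot ℕ∞) + 1 := add_le_add hn h2
      _ = ((n + 1 : ℕ) : WithBot ℕ∞) := by push_cast; ring

lemma krullDim_eq_rlen (h : IsFiniteLength R M) :
    krullDim (Submodule R M) = ((rlen R M : ℕ∞) : WithBot ℕ∞) := by
  obtain ⟨n, hn⟩ := krullDim_le_nat_of_isFiniteLength h
  have h0 : (0 : WithBot ℕ∞) ≤ krullDim (Submodule R M) := krullDim_nonneg
  rcases hd : krullDim (Submodule R M) with _ | e
  · rw [hd] at h0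
    exact absurd h0 (by simp [WithBot.none_eq_bot])
  · rw [hd] at hn
    rw [WithBot.some_eq_coe] at hd hn ⊢
    have he : e ≤ (n : ℕ∞) := by exact_mod_cast hn
    lift e to ℕ using (ne_top_of_le_ne_top (by simp) he)
    have hr : rlen R M = e := by
      unfold rlen
      rw [hd]
      simp
    rw [hr]

lemma exists_ltSeries_of_krullDim_eq_nat {γ : Type*} [PartialOrder γ] [Nonempty γ] {n : ℕ}
    (h : krullDim γ = (n : WithBot ℕ∞)) : ∃ p : LTSeries γ, p.length = n := by
  by_contra hc
  push_neg at hc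
  have hle : ∀ p : LTSeries γ, p.length ≤ n := by
    intro p
    have := LTSeries.length_le_krullDim p
    rw [h] at this
    exact_mod_cast this
  rcases Nat.eq_zero_or_pos n with h0 | hpos
  · exact hc (RelSeries.singleton _ (Classical.arbitrary γ)) (by simp [h0, RelSeries.singleton])
  · have : krullDim γ ≤ ((n - 1 : ℕ) : WithBot ℕ∞) := by
      apply iSup_le
      intro p
      have h1 := hle p
      have h2 := hc p
      have : p.length ≤ n - 1 := by omega
      exact_mod_cast this
    rw [h] at this
    have : (n : ℕ∞) ≤ ((n-1 : ℕ) : ℕ∞) := by exact_mod_cast this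
    have : n ≤ n - 1 := by exact_mod_cast this
    omega

end Modules

end ARAux

namespace ARAux
open Order

variable {R : Type*} [Ring R] {M N P : Type*} [AddCommGroup M] [Module R M]
  [AddCommGroup N] [Module R N] [AddCommGroup P] [Module R P]

lemma rlen_congr (e : M ≃ₗ[R] N) : rlen R M = rlen R N := by
  unfold rlen
  rw [Order.krullDim_eq_of_orderIso (Submodule.orderIsoMapComap e)]

lemma isFiniteLength_submodule (h : IsFiniteLength R M) (S : Submodule R M) :
    IsFiniteLength R S := by
  rw [isFiniteLength_iff_isNoetherian_isArtinian] at h ⊢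
  obtain ⟨h1, h2⟩ := h
  exact ⟨inferInstance, inferInstance⟩

lemma isFiniteLength_quotient (h : IsFiniteLength R M) (S : Submodule R M) :
    IsFiniteLength R (M ⧸ S) := by
  rw [isFiniteLength_iff_isNoetherian_isArtinian] at h ⊢
  obtain ⟨h1, h2⟩ := h
  exact ⟨inferInstance, inferInstance⟩

lemma rlen_additive (h : IsFiniteLength R M) (S : Submodule R M) :
    rlen R M = rlen R S + rlen R (M ⧸ S) := by
  have hS := isFiniteLength_submodule h S
  have hQ := isFiniteLength_quotient h S
  have kM := krullDim_eq_rlen h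
  have kS := krullDim_eq_rlen hS
  have kQ := krullDim_eq_rlen hQ
  -- upper bound
  have hle : rlen R M ≤ rlen R S + rlen R (M ⧸ S) := by
    have := krullDim_submodule_le S
    rw [kM, kS, kQ] at this
    exact_mod_cast this
  -- lower bound
  obtain ⟨p, hp⟩ := exists_ltSeries_of_krullDim_eq_nat (n := rlen R S) (by exact_mod_cast kS)
  obtain ⟨q, hq⟩ := exists_ltSeries_of_krullDim_eq_nat (n := rlen R (M ⧸ S)) (by exact_mod_cast kQ)
  have hge := add_chains_le_krullDim_submodule S p q
  rw [kM, hp, hq] at hge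
  have : rlen R S + rlen R (M ⧸ S) ≤ rlen R M := by exact_mod_cast hge
  omega

lemma rlen_eq_zero_iff (h : IsFiniteLength R M) : rlen R M = 0 ↔ Subsingleton M := by
  constructor
  · intro h0
    by_contra hns
    have : Nontrivial M := not_subsingleton_iff_nontrivial.mp hns
    obtain ⟨x, hx⟩ := exists_ne (0 : M)
    have hbot : (⊥ : Submodule R M) < ⊤ := by
      refine lt_of_le_of_ne le_top ?_
      intro he
      have : x ∈ (⊥ : Submodule R M) := by rw [he]; trivial
      exact hx (by simpa using this)
    have hchain := LTSeries.length_le_krullDim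
      ((RelSeries.singleton _ (⊥ : Submodule R M)).snoc ⊤ hbot)
    rw [krullDim_eq_rlen h, h0] at hchain
    have : (1:ℕ) ≤ (0:ℕ) := by exact_mod_cast hchain
    omega
  · intro hs
    have : Subsingleton (Submodule R M) := by
      constructor; intro a b; ext x; simp [Subsingleton.elim x (0 : M)]
    have h1 : krullDim (Submodule R M) ≤ 0 := krullDim_nonpos_of_subsingleton
    have h2 : (0:WithBot ℕ∞) ≤ krullDim (Submodule R M) := krullDim_nonneg
    have : krullDim (Submodule R M) = 0 := le_antisymm h1 h2
    unfold rlen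
    rw [this]
    rfl

lemma rlen_ker_add_range (h : IsFiniteLength R M) (φ : M →ₗ[R] P) :
    rlen R M = rlen R (LinearMap.ker φ) + rlen R (LinearMap.range φ) := by
  rw [rlen_additive h (LinearMap.ker φ), rlen_congr (φ.quotKerEquivRange)]

lemma rlen_ne_zero_iff (h : IsFiniteLength R M) :
    rlen R M ≠ 0 ↔ ∃ x : M, x ≠ 0 := by
  rw [ne_eq, rlen_eq_zero_iff h, not_subsingleton_iff_nontrivial]
  constructor
  · intro _; exact exists_ne 0
  · rintro ⟨x, hx⟩; exact ⟨x, 0, hx⟩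

end ARAux

section CatAux
namespace ARAux
open CategoryTheory CategoryTheory.Limits

variable {C : Type u} [Category.{v} C] [Preadditive C] [HasFiniteBiproducts C]

attribute [local instance] hasBinaryBiproducts_of_finite_biproducts

lemma bip_succ_iso {n : ℕ} (f : Fin (n + 2) → C) :
    Nonempty ((⨁ f) ≅ f 0 ⊞ ⨁ (fun i : Fin (n + 1) => f i.succ)) := by
  refine ⟨⟨biprod.lift (biproduct.π f 0) (biproduct.lift fun j => biproduct.π f j.succ),
    biprod.desc (biproduct.ι f 0) (biproduct.desc fun j => biproduct.ι f j.succ), ?_, ?_⟩⟩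
  · apply biproduct.hom_ext'
    intro i
    apply biproduct.hom_ext
    intro j
    simp only [Category.assoc, biprod.lift_desc, Preadditive.add_comp,
      biproduct.lift_π, Category.comp_id, Category.id_comp, biproduct.ι_π,
      Preadditive.comp_add, biproduct.lift_desc_assoc]
    rcases Fin.eq_zero_or_eq_succ i with rfl | ⟨i', rfl⟩ <;>
      rcases Fin.eq_zero_or_eq_succ j with rfl | ⟨j', rfl⟩ <;>
        simp [biproduct.ι_π, biproduct.ι_π_assoc, Preadditive.comp_sum,
          Preadditive.sum_comp, Fin.succ_ne_zero, fun i => (Fin.succ_ne_zero i).symm,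
          Fin.succ_inj, comp_dite, dite_comp, Finset.sum_dite_eq, Finset.sum_dite_eq']
  · ext
    all_goals simp [biproduct.ι_π, biproduct.ι_π_assoc, Preadditive.comp_sum,
        Preadditive.sum_comp, Fin.succ_ne_zero, fun i => (Fin.succ_ne_zero i).symm,
        Fin.succ_inj, comp_dite, dite_comp, Finset.sum_dite_eq, Finset.sum_dite_eq']

lemma isZero_of_biproduct_isZero {ι : Type} [Fintype ι] (f : ι → C) (h : IsZero (⨁ f)) (i : ι) :
    IsZero (f i) := by
  rw [IsZero.iff_id_eq_zero]
  have : biproduct.ι f i ≫ biproduct.π f i = 𝟙 (f i) := biproduct.ι_π_self f i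
  rw [← this]
  have h0 : (𝟙 (⨁ f) : _) = 0 := h.eq_of_src _ _
  calc biproduct.ι f i ≫ biproduct.π f i
      = biproduct.ι f i ≫ 𝟙 (⨁ f) ≫ biproduct.π f i := by simp
    _ = 0 := by rw [h0]; simp

/-- A Krull–Schmidt-style hypothesis localized to `U`. -/
def KSat (U : C) : Prop :=
  ∃ (n : ℕ) (f : Fin n → C), Nonempty (U ≅ ⨁ f) ∧ ∀ i, IsLocalRing (End (f i))

lemma idem_zero_or_id {U : C} (hks : KSat U) (hU : Indecomposable U)
    (ε : U ⟶ U) (hε : ε ≫ ε = ε) : ε = 0 ∨ ε = 𝟙 U := by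
  obtain ⟨n, f, ⟨φ⟩, hloc⟩ := hks
  have hfnz : ∀ i, ¬ IsZero (f i) := by
    intro i hz
    haveI := hloc i
    exact zero_ne_one (α := End (f i)) (hz.eq_of_src _ _)
  obtain h0 | h2 | h1 : n = 0 ∨ 2 ≤ n ∨ n = 1 := by omega
  · subst h0
    exfalso
    have hz : IsZero (⨁ f) := by
      rw [IsZero.iff_id_eq_zero]
      apply biproduct.hom_ext
      intro j
      exact j.elim0
    exact hU.1 (hz.of_iso φ)
  · obtain ⟨m, rfl⟩ : ∃ m, n = m + 2 := ⟨n - 2, by omega⟩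

    exfalso
    obtain ⟨e⟩ := bip_succ_iso f
    rcases hU.2 _ _ (φ ≪≫ e) with hz | hz
    · exact hfnz 0 hz
    · exact hfnz ((0 : Fin (m + 1)).succ) (isZero_of_biproduct_isZero _ hz 0)
  · subst h1
    have e : (⨁ f) ≅ f 0 := by
      refine ⟨biproduct.π f 0, biproduct.ι f 0, ?_, biproduct.ι_π_self f 0⟩
      apply biproduct.hom_ext'
      intro i
      apply biproduct.hom_ext
      intro j
      obtain rfl := Subsingleton.elim i 0
      obtain rfl := Subsingleton.elim j 0
      simp
    haveI := hloc 0
    set ψ : U ≅ f 0 := φ ≪≫ e with hψ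
    set ε' : End (f 0) := ψ.inv ≫ ε ≫ ψ.hom with hε'def
    have hcomp : ε' ≫ ε' = ε' := by
      rw [hε'def]
      have : ε ≫ ψ.hom ≫ ψ.inv ≫ ε ≫ ψ.hom = ε ≫ ε ≫ ψ.hom := by
        rw [Iso.hom_inv_id_assoc]
      simp only [Category.assoc, this]
      rw [← Category.assoc ε ε, hε]
    have hmul : ε' * ε' = ε' := by rw [End.mul_def]; exact hcomp
    have hback : ψ.hom ≫ ε' ≫ ψ.inv = ε := by
      rw [hε'def]
      simp
    rcases IsLocalRing.isUnit_or_isUnit_of_add_one (a := ε') (b := 1 - ε') (by abel) with hu | hu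
    · right
      have h1 : ε' = 1 := hu.mul_left_cancel (by rw [hmul, mul_one])
      rw [← hback, h1, End.one_def]
      simp
    · left
      have h0 : ε' = 0 := by
        apply hu.mul_left_cancel
        rw [mul_zero, sub_mul, one_mul, hmul, sub_self]
      rw [← hback, h0]
      simp

lemma isIso_of_splitEpi_target {U Y : C} (hks : KSat U) (hU : Indecomposable U)
    (t : U ⟶ Y) (σ : Y ⟶ U) (hσ : σ ≫ t = 𝟙 Y) (hY : ¬ IsZero Y) : IsIso t := by
  have he : (t ≫ σ) ≫ (t ≫ σ) = t ≫ σ := by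
    simp only [Category.assoc, reassoc_of% hσ]
  rcases idem_zero_or_id hks hU _ he with h0 | h1
  · exfalso
    apply hY
    rw [IsZero.iff_id_eq_zero]
    have hid : σ ≫ (t ≫ σ) ≫ t = 𝟙 Y := by
      simp only [Category.assoc, reassoc_of% hσ, hσ]
    rw [← hid, h0]
    simp
  · exact ⟨⟨σ, h1, hσ⟩⟩

end ARAux

end CatAux

namespace ARAux

section EquivAux

variable {C : Type*} [Category C] {D : Type*} [Category D] [Preadditive C] [Preadditive D]

lemma equiv_notZero (E : C ≌ D) [E.functor.Additive] {Co : D} (hC : ¬ IsZero Co) :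
    ¬ IsZero (E.inverse.obj Co) := by
  intro hz
  apply hC
  rw [IsZero.iff_id_eq_zero] at hz
  have h1 : IsZero (E.functor.obj (E.inverse.obj Co)) := by
    rw [IsZero.iff_id_eq_zero, ← CategoryTheory.Functor.map_id, hz, Functor.map_zero]
  exact h1.of_iso (E.counitIso.app Co).symm

lemma equiv_splitEpi_of (E : C ≌ D) {U : C} {Co : D} (s : U ⟶ E.inverse.obj Co)
    (hsp : IsSplitEpi (E.functor.map s ≫ E.counitIso.hom.app Co)) : IsSplitEpi s := by
  set t := E.functor.map s ≫ E.counitIso.hom.app Co with htdef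
  have hρ : CategoryTheory.section_ t ≫ t = 𝟙 Co := IsSplitEpi.id t
  have hms : E.functor.map s = t ≫ E.counitIso.inv.app Co := by rw [htdef]; simp
  have hσ : (E.counitIso.hom.app Co ≫ CategoryTheory.section_ t) ≫ E.functor.map s
      = 𝟙 _ := by
    rw [hms]
    simp [reassoc_of% hρ]
  obtain ⟨σ₀, hσ₀⟩ := E.functor.map_surjective
    (E.counitIso.hom.app Co ≫ CategoryTheory.section_ t)
  refine IsSplitEpi.mk' ⟨σ₀, E.functor.map_injective ?_⟩
  rw [Functor.map_comp, hσ₀, CategoryTheory.Functor.map_id]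
  exact hσ

lemma equiv_comp_zero (E : C ≌ D) [E.functor.Additive] {U : C} {Co X : D}
    (s : U ⟶ E.inverse.obj Co) (h : Co ⟶ X)
    (ht : (E.functor.map s ≫ E.counitIso.hom.app Co) ≫ h = 0) :
    s ≫ E.inverse.map h = 0 := by
  apply E.functor.map_injective
  rw [Functor.map_comp, Functor.map_zero]
  have hnat := E.counitIso.hom.naturality h
  simp only [Functor.comp_map, Functor.id_map] at hnat
  have hkey : E.functor.map (E.inverse.map h)
      = E.counitIso.hom.app Co ≫ h ≫ E.counitIso.inv.app X := by
    rw [← Category.assoc, ← hnat]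
    simp
  rw [hkey, ← Category.assoc, ← Category.assoc, ht]
  simp

end EquivAux

end ARAux


universe w

variable {R : Type w} [CommRing R]
variable {C : Type u} [Category.{v} C] [Preadditive C] [CategoryTheory.Linear R C]
  [HasZeroObject C] [HasShift C ℤ] [∀ n : ℤ, (shiftFunctor C n).Additive]
  [Pretriangulated C] [HasFiniteBiproducts C] [EssentiallySmall.{v} C]
/-- In a Hom-finite Krull-Schmidt `R`-linear triangulated category, for an
Auslander-Reiten triangle `A ⟶ B ⟶ C ⟶ ΣA` and an indecomposable `U`, one has
`[U,A] - [U,B] + [U,C] ≠ 0` iff `U ≅ C` or `U ≅ Σ⁻¹C`. -/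
theorem ar_triangle_alternating_length_ne_zero_iff
    (hfin : HomFinite C R) (hKS : KrullSchmidt C)
    {A B Co : C} (f : A ⟶ B) (g : B ⟶ Co) (h : Co ⟶ A⟦(1 : ℤ)⟧)
    (hAR : IsARTriangle C (Triangle.mk f g h)) (U : C) (hU : Indecomposable U) :
    (rlen R (U ⟶ A) : ℤ) - (rlen R (U ⟶ B) : ℤ) + (rlen R (U ⟶ Co) : ℤ) ≠ 0 ↔
      Nonempty (U ≅ Co) ∨ Nonempty (U ≅ (shiftFunctor C (-1 : ℤ)).obj Co) := by
  classical
  haveI : HasBinaryBiproducts C := hasBinaryBiproducts_of_finite_biproducts C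
  obtain ⟨hT, hA', hC', hh, hfac⟩ := hAR
  have hCo : ¬ IsZero Co := hC'.1
  set φ := Linear.rightComp R U f with hφdef
  set ψ := Linear.rightComp R U g with hψdef
  set χ := Linear.rightComp R U h with hχdef
  have hfinA : IsFiniteLength R (U ⟶ A) := hfin U A
  have hfinB : IsFiniteLength R (U ⟶ B) := hfin U B
  have hfinC : IsFiniteLength R (U ⟶ Co) := hfin U Co
  have e1 := ARAux.rlen_ker_add_range hfinA φ
  have e2 := ARAux.rlen_ker_add_range hfinB ψ
  have e3 := ARAux.rlen_ker_add_range hfinC χ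
  have hk2 : LinearMap.ker ψ = LinearMap.range φ := by
    ext a
    simp only [LinearMap.mem_ker, LinearMap.mem_range, hψdef, hφdef, Linear.rightComp_apply]
    constructor
    · intro ha
      obtain ⟨b, hb⟩ := Triangle.coyoneda_exact₂ _ hT a ha
      exact ⟨b, hb.symm⟩
    · rintro ⟨b, rfl⟩
      have h12 : f ≫ g = 0 := comp_distTriang_mor_zero₁₂ _ hT
      rw [Category.assoc, h12, Limits.comp_zero]
  have hk3 : LinearMap.ker χ = LinearMap.range ψ := by
    ext a
    simp only [LinearMap.mem_ker, LinearMap.mem_range, hχdef, hψdef, Linear.rightComp_apply]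
    constructor
    · intro ha
      obtain ⟨b, hb⟩ := Triangle.coyoneda_exact₃ _ hT a ha
      exact ⟨b, hb.symm⟩
    · rintro ⟨b, rfl⟩
      have h23 : g ≫ h = 0 := comp_distTriang_mor_zero₂₃ _ hT
      rw [Category.assoc, h23, Limits.comp_zero]
  rw [hk2] at e2
  rw [hk3] at e3
  have key : ((rlen R (U ⟶ A) : ℤ) - rlen R (U ⟶ B) + rlen R (U ⟶ Co) ≠ 0)
      ↔ (rlen R (LinearMap.ker φ) ≠ 0 ∨ rlen R (LinearMap.range χ) ≠ 0) := by
    rw [e1, e2, e3]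
    push_cast
    omega
  rw [key]
  constructor
  · rintro (hk | hr)
    · -- nontrivial kernel forces U ≅ Σ⁻¹ Co
      right
      obtain ⟨a, ha⟩ := (ARAux.rlen_ne_zero_iff
        (ARAux.isFiniteLength_submodule hfinA _)).mp hk
      have haf : (a : U ⟶ A) ≫ f = 0 := LinearMap.mem_ker.mp a.2
      have hane : (a : U ⟶ A) ≠ 0 := fun h0 => ha (Subtype.ext h0)
      set T' := (Triangle.mk f g h).invRotate with hT'def
      have hT' : T' ∈ distTriang C := inv_rot_of_distTriang _ hT
      obtain ⟨s, hs⟩ := Triangle.coyoneda_exact₂ T' hT' (a : U ⟶ A) haf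
      haveI : ((shiftEquiv C (1 : ℤ)).functor).Additive :=
        inferInstanceAs ((shiftFunctor C (1 : ℤ)).Additive)
      by_cases hsp : IsSplitEpi s
      · haveI := ARAux.isIso_of_splitEpi_target (hKS U) hU s (CategoryTheory.section_ s)
          (IsSplitEpi.id s) (ARAux.equiv_notZero (shiftEquiv C (1 : ℤ)) hCo)
        exact ⟨@asIso _ _ _ _ s this⟩
      · exfalso
        set t : (shiftFunctor C (1 : ℤ)).obj U ⟶ Co :=
          (shiftFunctor C (1 : ℤ)).map s ≫ (shiftEquiv C (1 : ℤ)).counitIso.hom.app Co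
          with htdef
        have hts : ¬ IsSplitEpi t := fun hspt =>
          hsp (ARAux.equiv_splitEpi_of (shiftEquiv C (1 : ℤ)) s hspt)
        obtain ⟨w, hw⟩ : ∃ w : _ ⟶ B, w ≫ g = t := hfac t hts
        have hw' : w ≫ g = t := hw
        have h23 : g ≫ h = 0 := comp_distTriang_mor_zero₂₃ _ hT
        have hth : t ≫ h = 0 := by rw [← hw', Category.assoc, h23, Limits.comp_zero]
        have hz : s ≫ (shiftFunctor C (-1 : ℤ)).map h = 0 :=
          ARAux.equiv_comp_zero (shiftEquiv C (1 : ℤ)) s h hth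
        apply hane
        rw [hs]
        have hmor : T'.mor₁ = -((shiftFunctor C (-1 : ℤ)).map h) ≫
            (shiftEquiv C (1 : ℤ)).unitIso.inv.app A := rfl
        erw [hmor, Preadditive.comp_neg, ← Category.assoc, hz, Limits.zero_comp, neg_zero]; rfl
    · -- nontrivial image forces U ≅ Co
      left
      obtain ⟨x, hx⟩ := (ARAux.rlen_ne_zero_iff
        (ARAux.isFiniteLength_submodule (hfin U _) _)).mp hr
      obtain ⟨t, htx⟩ := x.2
      have hth : t ≫ h ≠ 0 := by
        have hxv : (x : U ⟶ (shiftFunctor C (1 : ℤ)).obj A) ≠ 0 := by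
          intro h0
          exact hx (ZeroMemClass.coe_eq_zero.mp h0)
        intro h0
        apply hxv
        rw [← htx, hχdef, Linear.rightComp_apply]
        exact h0
      have hts : IsSplitEpi t := by
        by_contra hns
        obtain ⟨w, hw⟩ : ∃ w : _ ⟶ B, w ≫ g = t := hfac t hns
        have hw' : w ≫ g = t := hw
        have h23 : g ≫ h = 0 := comp_distTriang_mor_zero₂₃ _ hT
        exact hth (by rw [← hw', Category.assoc, h23, Limits.comp_zero])
      haveI := ARAux.isIso_of_splitEpi_target (hKS U) hU t (CategoryTheory.section_ t)
        (IsSplitEpi.id t) hCo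
      exact ⟨asIso t⟩
  · rintro (hρ | hρ)
    all_goals obtain ⟨ρ⟩ := hρ
    · right
      have hth : ρ.hom ≫ h ≠ 0 := by
        intro h0
        apply hh
        show h = 0
        have : h = ρ.inv ≫ (ρ.hom ≫ h) := by simp
        rw [this, h0, Limits.comp_zero]
      apply (ARAux.rlen_ne_zero_iff
        (ARAux.isFiniteLength_submodule (hfin U _) _)).mpr
      refine ⟨⟨ρ.hom ≫ h, ⟨ρ.hom, ?_⟩⟩, ?_⟩
      · rw [hχdef, Linear.rightComp_apply]
      · intro h0
        exact hth (congrArg Subtype.val h0)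
    · left
      set T' := (Triangle.mk f g h).invRotate with hT'def
      have hT' : T' ∈ distTriang C := inv_rot_of_distTriang _ hT
      have hmor : T'.mor₁ = -((shiftFunctor C (-1 : ℤ)).map h) ≫
          (shiftEquiv C (1 : ℤ)).unitIso.inv.app A := rfl
      have hd : T'.mor₁ ≠ 0 := by
        intro h0
        apply hh
        show h = 0
        erw [hmor, neg_eq_zero] at h0
        have hm : (shiftFunctor C (-1 : ℤ)).map h = 0 := by
          erw [← cancel_mono ((shiftEquiv C (1 : ℤ)).unitIso.inv.app A), h0,
            Limits.zero_comp]; rfl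
        apply (shiftFunctor C (-1 : ℤ)).map_injective
        rw [hm, Functor.map_zero]
      have h12 : T'.mor₁ ≫ T'.mor₂ = 0 := comp_distTriang_mor_zero₁₂ _ hT'
      have h12' : T'.mor₁ ≫ f = 0 := h12
      have haf : (ρ.hom ≫ T'.mor₁) ≫ f = 0 := by
        erw [Category.assoc, h12', Limits.comp_zero]
      apply (ARAux.rlen_ne_zero_iff
        (ARAux.isFiniteLength_submodule hfinA _)).mpr
      refine ⟨⟨ρ.hom ≫ T'.mor₁, ?_⟩, ?_⟩
      · apply LinearMap.mem_ker.mpr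
        rw [hφdef, Linear.rightComp_apply]
        exact haf
      · intro h0
        have hv : ρ.hom ≫ T'.mor₁ = 0 := congrArg Subtype.val h0
        apply hd
        erw [← Iso.inv_hom_id_assoc ρ T'.mor₁, hv, Limits.comp_zero]; rfl
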